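/- For all k ≥ 4 and n ≥ 2, pp_k(n) ≥ pp_k(n-1); in particular pp_k(2k+7) ≥ pp_k(2k+6) + 1. -/

import Mathlib

/-- `pCount k n` is the number of partitions of `n` all of whose parts lie in `{2, …, k}`. -/
noncomputable def pCount (k n : ℕ) : ℕ :=
  Nat.card {p : n.Partition // ∀ i ∈ p.parts, 2 ≤ i ∧ i ≤ k}

/-- `ppCount k n` is the number of pairs `(α, β)` of partitions with `|α| + |β| = n`,
where every part of `α` lies in `{2, …, k}` and every part of `β` lies in `{2, …, k+1}`. -/
noncomputable def ppCount (k n : ℕ) : ℕ :=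
  ∑ i ∈ Finset.range (n + 1), pCount k i * pCount (k + 1) (n - i)


/-- sum of `f 0 + f 1 + ... + f n` -/
def sumTo (f : ℕ → ℕ) : ℕ → ℕ
  | 0 => f 0
  | t + 1 => f (t + 1) + sumTo f t

/-- number of multisets from the list `L` (with each entry usable any number of times)
summing to `n`. -/
def cnt : List ℕ → ℕ → ℕ
  | [], n => if n = 0 then 1 else 0
  | a :: L, n => sumTo (fun t => if a * t ≤ n then cnt L (n - a * t) else 0) n

lemma sumTo_shift (f : ℕ → ℕ) (m : ℕ) :
    sumTo f (m + 1) = sumTo (fun t => f (t + 1)) m + f 0 := by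
  induction m with
  | zero => simp [sumTo]
  | succ m ih =>
      rw [show m + 1 + 1 = (m+1) + 1 from rfl, sumTo, ih, sumTo]
      ring

lemma sumTo_congr {f g : ℕ → ℕ} (m : ℕ) (h : ∀ t ≤ m, f t = g t) :
    sumTo f m = sumTo g m := by
  induction m with
  | zero => simp [sumTo, h 0 (by omega)]
  | succ m ih => rw [sumTo, sumTo, h (m+1) le_rfl, ih (fun t ht => h t (by omega))]

lemma sumTo_vanish {f : ℕ → ℕ} {M N : ℕ} (hMN : M ≤ N) (h : ∀ t, M < t → f t = 0) :
    sumTo f N = sumTo f M := by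
  induction N with
  | zero => rw [Nat.le_zero.1 hMN]
  | succ N ih =>
      rcases Nat.eq_or_lt_of_le hMN with rfl | hlt
      · rfl
      · rw [sumTo, h (N+1) (by omega), ih (by omega), Nat.zero_add]

lemma cnt_zero (L : List ℕ) : cnt L 0 = 1 := by
  induction L with
  | nil => rfl
  | cons a L ih => simp [cnt, sumTo, ih]

lemma cnt_cons_lt {a n : ℕ} (h : n < a) (L : List ℕ) : cnt (a :: L) n = cnt L n := by
  rw [cnt, sumTo_vanish (Nat.zero_le n) (fun t ht => by
    have : ¬ a * t ≤ n := by nlinarith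
    simp [this])]
  simp [sumTo]

lemma cnt_cons_add (a : ℕ) (ha : 1 ≤ a) (L : List ℕ) (n : ℕ) :
    cnt (a :: L) (n + a) = cnt L (n + a) + cnt (a :: L) n := by
  obtain ⟨m, hm⟩ : ∃ m, n + a = m + 1 := ⟨n + a - 1, by omega⟩
  have h1 : sumTo (fun t => if a * (t+1) ≤ m + 1 then cnt L (m + 1 - a * (t+1)) else 0) m
      = sumTo (fun t => if a * t ≤ n then cnt L (n - a * t) else 0) m := by
    apply sumTo_congr
    intro t _
    rcases le_or_gt (a*t) n with h | h
    · rw [if_pos (by nlinarith), if_pos h]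
      congr 1
      have : a * (t+1) = a * t + a := by ring
      omega
    · rw [if_neg (by nlinarith), if_neg (by omega)]
  have h2 : sumTo (fun t => if a * t ≤ n then cnt L (n - a * t) else 0) m
      = cnt (a :: L) n := by
    rw [cnt]
    exact sumTo_vanish (by omega) (fun t ht => by
      have : ¬ a * t ≤ n := by nlinarith
      simp [this])
  rw [cnt, hm, sumTo_shift, h1, h2]
  have : a * 0 ≤ m + 1 := by omega
  rw [if_pos this]
  have : m + 1 - a * 0 = m + 1 := by omega
  rw [this, Nat.add_comm]

/-- combined recurrence -/
lemma cnt_cons (a : ℕ) (ha : 1 ≤ a) (L : List ℕ) (n : ℕ) :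
    cnt (a :: L) n = cnt L n + (if a ≤ n then cnt (a :: L) (n - a) else 0) := by
  rcases le_or_gt a n with h | h
  · rw [if_pos h]
    have := cnt_cons_add a ha L (n - a)
    rw [show n - a + a = n by omega] at this
    omega
  · rw [if_neg (by omega), cnt_cons_lt h, Nat.add_zero]

lemma cnt_all_gt {n : ℕ} (L : List ℕ) (hn : 1 ≤ n) (h : ∀ x ∈ L, n < x) : cnt L n = 0 := by
  induction L with
  | nil => simp [cnt]; omega
  | cons a L ih =>
      rw [cnt_cons_lt (h a (by simp))]
      exact ih (fun x hx => h x (by simp [hx]))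

lemma cnt_one (L : List ℕ) (h : ∀ x ∈ L, 2 ≤ x) : cnt L 1 = 0 :=
  cnt_all_gt L le_rfl (fun x hx => by have := h x hx; omega)

example : cnt [2,2,3,3,4,4,5] 7 = 12 := by decide

lemma cnt_cons_le {a n : ℕ} (ha : 1 ≤ a) (h : a ≤ n) (L : List ℕ) :
    cnt (a :: L) n = cnt L n + cnt (a :: L) (n - a) := by
  rw [cnt_cons a ha L n, if_pos h]

lemma cnt_swap (a b : ℕ) (ha : 1 ≤ a) (hb : 1 ≤ b) (L : List ℕ) (n : ℕ) :
    cnt (a :: b :: L) n = cnt (b :: a :: L) n := by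
  induction n using Nat.strong_induction_on with
  | _ n IH =>
    rcases le_or_gt a n with hA | hA
    · rcases le_or_gt b n with hB | hB
      · have L1 : cnt (a::b::L) n = cnt (b::L) n + cnt (a::b::L) (n-a) :=
          cnt_cons_le ha hA _
        have L2 : cnt (b::L) n = cnt L n + cnt (b::L) (n-b) := cnt_cons_le hb hB _
        have L3 : cnt (a::b::L) (n-a) = cnt (b::a::L) (n-a) := IH _ (by omega)
        have R1 : cnt (b::a::L) n = cnt (a::L) n + cnt (b::a::L) (n-b) :=
          cnt_cons_le hb hB _
        have R2 : cnt (a::L) n = cnt L n + cnt (a::L) (n-a) := cnt_cons_le ha hA _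
        have R3 : cnt (b::a::L) (n-b) = cnt (a::b::L) (n-b) := (IH _ (by omega)).symm
        rcases le_or_gt b (n - a) with hBA | hBA
        · have hAB : a ≤ n - b := by omega
          have L4 : cnt (b::a::L) (n-a) = cnt (a::L) (n-a) + cnt (b::a::L) (n-a-b) :=
            cnt_cons_le hb hBA _
          have R4 : cnt (a::b::L) (n-b) = cnt (b::L) (n-b) + cnt (a::b::L) (n-b-a) :=
            cnt_cons_le ha hAB _
          have R5 : cnt (a::b::L) (n-b-a) = cnt (b::a::L) (n-a-b) := by
            rw [show n-b-a = n-a-b by omega]; exact IH _ (by omega)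
          omega
        · have hAB : n - b < a := by omega
          have L4 : cnt (b::a::L) (n-a) = cnt (a::L) (n-a) := cnt_cons_lt hBA _
          have R4 : cnt (a::b::L) (n-b) = cnt (b::L) (n-b) := cnt_cons_lt hAB _
          omega
      · have L1 : cnt (a::b::L) n = cnt (b::L) n + cnt (a::b::L) (n-a) :=
          cnt_cons_le ha hA _
        have L2 : cnt (b::L) n = cnt L n := cnt_cons_lt hB _
        have L3 : cnt (a::b::L) (n-a) = cnt (b::a::L) (n-a) := IH _ (by omega)
        have L4 : cnt (b::a::L) (n-a) = cnt (a::L) (n-a) :=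
          cnt_cons_lt (show n - a < b by omega) _
        have R1 : cnt (b::a::L) n = cnt (a::L) n := cnt_cons_lt hB _
        have R2 : cnt (a::L) n = cnt L n + cnt (a::L) (n-a) := cnt_cons_le ha hA _
        omega
    · rcases le_or_gt b n with hB | hB
      · have L1 : cnt (a::b::L) n = cnt (b::L) n := cnt_cons_lt hA _
        have L2 : cnt (b::L) n = cnt L n + cnt (b::L) (n-b) := cnt_cons_le hb hB _
        have R1 : cnt (b::a::L) n = cnt (a::L) n + cnt (b::a::L) (n-b) :=
          cnt_cons_le hb hB _
        have R2 : cnt (a::L) n = cnt L n := cnt_cons_lt hA _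
        have R3 : cnt (b::a::L) (n-b) = cnt (a::b::L) (n-b) := (IH _ (by omega)).symm
        have R4 : cnt (a::b::L) (n-b) = cnt (b::L) (n-b) :=
          cnt_cons_lt (show n - b < a by omega) _
        omega
      · rw [cnt_cons_lt hA, cnt_cons_lt hB, cnt_cons_lt hB, cnt_cons_lt hA]

lemma cnt_perm {L₁ L₂ : List ℕ} (h : L₁.Perm L₂) :
    (∀ x ∈ L₁, 1 ≤ x) → ∀ n, cnt L₁ n = cnt L₂ n := by
  induction h with
  | nil => intro _ n; rfl
  | @cons a l₁ l₂ h ih =>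
      intro h1 n
      rw [cnt, cnt]
      apply sumTo_congr
      intro t _
      split
      · exact ih (fun x hx => h1 x (by simp [hx])) _
      · rfl
  | @swap a b L =>
      intro h1 n
      exact cnt_swap b a (h1 b (by simp)) (h1 a (by simp)) L n
  | @trans l₁ l₂ l₃ p1 p2 ih1 ih2 =>
      intro h1 n
      rw [ih1 h1 n, ih2 (fun x hx => h1 x (p1.mem_iff.2 hx)) n]

open Finset in
lemma sum_shift_helper (h : ℕ → ℕ) (a n : ℕ) (han : a ≤ n) :
    ∑ j ∈ range (n+1), (if a ≤ j then h (j-a) else 0) = ∑ i ∈ range (n-a+1), h i := by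
  rw [range_eq_Ico, ← Finset.sum_Ico_consecutive _ (Nat.zero_le a) (by omega : a ≤ n+1)]
  have h1 : ∑ j ∈ Ico 0 a, (if a ≤ j then h (j-a) else 0) = 0 := by
    apply Finset.sum_eq_zero
    intro j hj
    rw [Finset.mem_Ico] at hj
    rw [if_neg (by omega)]
  rw [h1, Nat.zero_add, Finset.sum_Ico_eq_sum_range,
     show n + 1 - a = n - a + 1 by omega]
  apply Finset.sum_congr rfl
  intro i _
  rw [if_pos (by omega)]
  congr 1
  omega

open Finset in
lemma cnt_append (L₁ L₂ : List ℕ) (h1 : ∀ x ∈ L₁, 1 ≤ x) (n : ℕ) :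
    cnt (L₁ ++ L₂) n = ∑ i ∈ range (n+1), cnt L₁ i * cnt L₂ (n - i) := by
  induction L₁ generalizing n with
  | nil =>
      rw [List.nil_append]
      rw [Finset.sum_eq_single 0 (fun b _ hb => by simp [cnt, hb]) (by simp)]
      simp [cnt, cnt_zero]
  | cons a L ih =>
      have ha : 1 ≤ a := h1 a (by simp)
      have hL : ∀ x ∈ L, 1 ≤ x := fun x hx => h1 x (by simp [hx])
      induction n using Nat.strong_induction_on with
      | _ n IH =>
        simp only [List.cons_append] at IH ⊢
        rw [cnt_cons a ha _ n, ih hL n]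
        rcases le_or_gt a n with h | h
        · rw [if_pos h, IH (n-a) (by omega)]
          have e1 : ∑ i ∈ range (n-a+1), cnt (a::L) i * cnt L₂ (n-a-i)
              = ∑ j ∈ range (n+1), (if a ≤ j then cnt (a::L) (j-a) else 0) * cnt L₂ (n-j) := by
            rw [← sum_shift_helper (fun i => cnt (a::L) i * cnt L₂ (n-a-i)) a n h]
            apply Finset.sum_congr rfl
            intro j _
            split
            · congr 2; omega
            · rw [Nat.zero_mul]
          rw [e1, ← Finset.sum_add_distrib]
          apply Finset.sum_congr rfl
          intro j _
          rw [← Nat.add_mul]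
          congr 1
          rw [cnt_cons a ha L j]
        · rw [if_neg (by omega), Nat.add_zero]
          apply Finset.sum_congr rfl
          intro j hj
          rw [Finset.mem_range] at hj
          congr 1
          exact (cnt_cons_lt (by omega) L).symm

/-- count of partitions of `n` with all parts satisfying `P` -/
noncomputable def NP (P : ℕ → Prop) (n : ℕ) : ℕ := Nat.card {p : n.Partition // ∀ i ∈ p.parts, P i}

lemma NP_congr (P Q : ℕ → Prop) (n : ℕ) (h : ∀ i, i ≤ n → (P i ↔ Q i)) :
    NP P n = NP Q n := by
  apply Nat.card_congr
  apply Equiv.subtypeEquivRight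
  intro p
  constructor <;> intro hp i hi
  · have hle : i ≤ n := by
      have := Multiset.single_le_sum (fun x _ => Nat.zero_le x) i hi
      rw [p.parts_sum] at this; exact this
    exact (h i hle).1 (hp i hi)
  · have hle : i ≤ n := by
      have := Multiset.single_le_sum (fun x _ => Nat.zero_le x) i hi
      rw [p.parts_sum] at this; exact this
    exact (h i hle).2 (hp i hi)

lemma NP_zero (P : ℕ → Prop) : NP P 0 = 1 := by
  have h : ∀ (p : Nat.Partition 0), ∀ i ∈ p.parts, P i := by
    intro p i hi
    rw [p.partition_zero_parts] at hi
    exact absurd hi (Multiset.notMem_zero i)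
  rw [NP, Nat.card_congr (Equiv.subtypeUnivEquiv h)]
  exact Nat.card_unique

lemma NP_empty (n : ℕ) (hn : 1 ≤ n) : NP (fun _ => False) n = 0 := by
  rw [NP]
  have : IsEmpty {p : n.Partition // ∀ i ∈ p.parts, False} := by
    constructor
    rintro ⟨p, hp⟩
    have hne : p.parts ≠ 0 := by
      intro h0
      have := p.parts_sum
      rw [h0] at this
      simp at this
      omega
    obtain ⟨i, hi⟩ := Multiset.exists_mem_of_ne_zero hne
    exact hp i hi
  exact Nat.card_of_isEmpty

/-- The splitting equivalence: partitions with parts satisfying `P` either avoid `a` or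
contain `a` (and removing one copy gives a partition of `n - a`). -/
def NPequiv (P : ℕ → Prop) (a n : ℕ) (ha : 1 ≤ a) (hPa : P a) (han : a ≤ n) :
    {p : n.Partition // ∀ i ∈ p.parts, P i} ≃
      {p : n.Partition // ∀ i ∈ p.parts, P i ∧ i ≠ a} ⊕
      {q : (n - a).Partition // ∀ i ∈ q.parts, P i} where
  toFun p :=
    if h : a ∈ p.1.parts then
      Sum.inr ⟨⟨p.1.parts.erase a,
        fun hi => p.1.parts_pos (Multiset.mem_of_mem_erase hi), by
          have h2 := Multiset.cons_erase h
          have h3 : (a ::ₘ p.1.parts.erase a).sum = n := by rw [h2, p.1.parts_sum]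
          rw [Multiset.sum_cons] at h3
          omega⟩,
        fun i hi => p.2 i (Multiset.mem_of_mem_erase hi)⟩
    else
      Sum.inl ⟨p.1, fun i hi => ⟨p.2 i hi, fun hia => h (hia ▸ hi)⟩⟩
  invFun s :=
    match s with
    | Sum.inl p => ⟨p.1, fun i hi => (p.2 i hi).1⟩
    | Sum.inr q => ⟨⟨a ::ₘ q.1.parts, by
        intro i hi
        rcases Multiset.mem_cons.1 hi with rfl | h
        · omega
        · exact q.1.parts_pos h, by
        rw [Multiset.sum_cons, q.1.parts_sum]; omega⟩,
      fun i hi => by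
        rcases Multiset.mem_cons.1 hi with rfl | h
        · exact hPa
        · exact q.2 i h⟩
  left_inv p := by
    by_cases h : a ∈ p.1.parts
    · simp only [dif_pos h]
      exact Subtype.ext (Nat.Partition.ext (Multiset.cons_erase h))
    · simp only [dif_neg h]
  right_inv s := by
    rcases s with p | q
    · have h : a ∉ (p.1).parts := fun h => (p.2 a h).2 rfl
      simp only [dif_neg h]
    · have h : a ∈ a ::ₘ q.1.parts := Multiset.mem_cons_self a _
      simp only [dif_pos h]
      congr 1
      exact Subtype.ext (Nat.Partition.ext (Multiset.erase_cons_head a _))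

lemma NP_step (P : ℕ → Prop) (a n : ℕ) (ha : 1 ≤ a) (hPa : P a) (han : a ≤ n) :
    NP P n = NP (fun i => P i ∧ i ≠ a) n + NP P (n - a) := by
  rw [NP, Nat.card_congr (NPequiv P a n ha hPa han), Nat.card_sum]
  rfl

lemma NP_notmem (P : ℕ → Prop) (a n : ℕ) (han : n < a) :
    NP P n = NP (fun i => P i ∧ i ≠ a) n :=
  NP_congr _ _ n (fun i hi => by
    constructor
    · exact fun h => ⟨h, by omega⟩
    · exact fun h => h.1)

lemma NP_eq_cnt : ∀ (L : List ℕ), L.Nodup → (∀ x ∈ L, 1 ≤ x) →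
    ∀ n, NP (· ∈ L) n = cnt L n := by
  intro L
  induction L with
  | nil =>
      intro _ _ n
      rcases Nat.eq_zero_or_pos n with rfl | hn
      · rw [NP_zero, cnt_zero]
      · rw [cnt, if_neg (by omega), NP_congr _ (fun _ => False) n (by simp),
          NP_empty n hn]
  | cons a L ih =>
      intro hd hp
      have ha : 1 ≤ a := hp a (by simp)
      have haL : a ∉ L := by simp at hd; exact hd.1
      have hL : ∀ x ∈ L, 1 ≤ x := fun x hx => hp x (by simp [hx])
      have hdL : L.Nodup := by simp at hd; exact hd.2
      intro n
      induction n using Nat.strong_induction_on with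
      | _ n IH =>
        have hcongr : NP (fun i => i ∈ a :: L ∧ i ≠ a) n = NP (· ∈ L) n := by
          apply NP_congr
          intro i _
          constructor
          · rintro ⟨hi, hne⟩
            rcases List.mem_cons.1 hi with rfl | h
            · exact absurd rfl hne
            · exact h
          · intro h
            exact ⟨List.mem_cons.2 (Or.inr h), fun he => haL (he ▸ h)⟩
        rcases le_or_gt a n with h | h
        · rw [NP_step (· ∈ a :: L) a n ha (by simp) h, hcongr, ih hdL hL n,
            IH (n - a) (by omega), cnt_cons a ha L n, if_pos h]
        · rw [NP_notmem (· ∈ a :: L) a n h, hcongr, ih hdL hL n, cnt_cons_lt h]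

lemma pCount_eq_cnt (k n : ℕ) (hk : 1 ≤ k) :
    pCount k n = cnt (List.range' 2 (k-1)) n := by
  rw [show pCount k n = NP (fun i => 2 ≤ i ∧ i ≤ k) n from rfl]
  rw [NP_congr _ (· ∈ List.range' 2 (k-1)) n (fun i _ => by
    show 2 ≤ i ∧ i ≤ k ↔ i ∈ List.range' 2 (k-1)
    rw [List.mem_range'_1]
    omega)]
  exact NP_eq_cnt _ List.nodup_range' (fun x hx => by
    rw [List.mem_range'_1] at hx; omega) n

/-- list of allowed parts for the pair counting: `[2..k] ++ [2..k+1]` -/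
def LL (k : ℕ) : List ℕ := List.range' 2 (k-1) ++ List.range' 2 k

lemma LL_elts (k : ℕ) : ∀ x ∈ LL k, 2 ≤ x := by
  intro x hx
  rcases List.mem_append.1 hx with h | h <;>
    · rw [List.mem_range'_1] at h; omega

lemma LL_elts1 (k : ℕ) : ∀ x ∈ LL k, 1 ≤ x :=
  fun x hx => by have := LL_elts k x hx; omega

lemma ppCount_eq_cnt (k n : ℕ) (hk : 1 ≤ k) : ppCount k n = cnt (LL k) n := by
  rw [ppCount, LL, cnt_append _ _ (fun x hx => by
    rw [List.mem_range'_1] at hx; omega)]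
  apply Finset.sum_congr rfl
  intro i _
  rw [pCount_eq_cnt k i hk, pCount_eq_cnt (k+1) (n-i) (by omega),
    show k + 1 - 1 = k from rfl]

lemma perm_concat_pair (P Q : List ℕ) (x y : ℕ) :
    ((P ++ [x]) ++ (Q ++ [y])).Perm (y :: x :: (P ++ Q)) := by
  have s1 : ((P ++ [x]) ++ (Q ++ [y])) = ((P ++ [x]) ++ Q) ++ [y] :=
    (List.append_assoc (P ++ [x]) Q [y]).symm
  rw [s1]
  refine (List.perm_append_singleton _ _).trans (List.Perm.cons y ?_)
  have s2 : (P ++ [x]) ++ Q = P ++ (x :: Q) := by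
    rw [List.append_assoc]
    rfl
  rw [s2]
  exact List.perm_middle

lemma LL_step_perm (k : ℕ) (hk : 1 ≤ k) : (LL (k+1)).Perm ((k+2) :: (k+1) :: LL k) := by
  have h1 : List.range' 2 k = List.range' 2 (k-1) ++ [k+1] := by
    conv_lhs => rw [show k = (k-1)+1 by omega]
    rw [List.range'_concat]
    congr 2
    omega
  have h2 : List.range' 2 (k+1) = List.range' 2 k ++ [k+2] := by
    rw [List.range'_concat]
    congr 2
    omega
  rw [LL, show k+1-1 = k by omega, h2, LL]
  nth_rewrite 1 [h1]
  exact perm_concat_pair _ _ _ _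

lemma cnt_LL_zero (k : ℕ) : cnt (LL k) 0 = 1 := cnt_zero _

lemma cnt_LL_one (k : ℕ) : cnt (LL k) 1 = 0 := cnt_one _ (LL_elts k)

lemma cnt_LL_two (k : ℕ) (hk : 2 ≤ k) : cnt (LL k) 2 = 2 := by
  have hA : List.range' 2 (k-1) = 2 :: List.range' 3 (k-2) := by
    conv_lhs => rw [show k-1 = (k-2)+1 by omega]
    rw [List.range'_succ]
  have hB : List.range' 2 k = 2 :: List.range' 3 (k-1) := by
    conv_lhs => rw [show k = (k-1)+1 by omega]
    rw [List.range'_succ]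
  have hperm : (LL k).Perm (2 :: 2 :: (List.range' 3 (k-2) ++ List.range' 3 (k-1))) := by
    rw [LL, hA, hB]
    exact List.Perm.cons 2 List.perm_middle
  rw [cnt_perm hperm (LL_elts1 k) 2]
  set C := List.range' 3 (k-2) ++ List.range' 3 (k-1) with hC
  have hCg : ∀ x ∈ C, 2 < x := by
    intro x hx
    rcases List.mem_append.1 hx with h | h <;>
      · rw [List.mem_range'_1] at h; omega
  have e0 : cnt C 2 = 0 := cnt_all_gt C (by omega) hCg
  have e1 : cnt (2 :: C) 2 = cnt C 2 + cnt (2 :: C) 0 := by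
    have := cnt_cons_le (a := 2) (n := 2) (by omega) (by omega) C
    simpa using this
  have e2 : cnt (2 :: 2 :: C) 2 = cnt (2 :: C) 2 + cnt (2 :: 2 :: C) 0 := by
    have := cnt_cons_le (a := 2) (n := 2) (by omega) (by omega) (2 :: C)
    simpa using this
  rw [e2, e1, e0, cnt_zero, cnt_zero]

/-! ### The base case `k = 4`: explicit lists and the peeling chain -/

def l1 : List ℕ := [5]
def l2 : List ℕ := 4 :: l1
def l3 : List ℕ := 4 :: l2
def l4 : List ℕ := 3 :: l3
def l5 : List ℕ := 2 :: l4
def l6 : List ℕ := 3 :: l5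
def l7 : List ℕ := 2 :: l6

lemma rF (n : ℕ) : cnt l7 (n+2) = cnt l6 (n+2) + cnt l7 n := cnt_cons_add 2 (by omega) l6 n
lemma rc6 (n : ℕ) : cnt l6 (n+3) = cnt l5 (n+3) + cnt l6 n := cnt_cons_add 3 (by omega) l5 n
lemma rc5 (n : ℕ) : cnt l5 (n+2) = cnt l4 (n+2) + cnt l5 n := cnt_cons_add 2 (by omega) l4 n
lemma rb4 (n : ℕ) : cnt l4 (n+3) = cnt l3 (n+3) + cnt l4 n := cnt_cons_add 3 (by omega) l3 n
lemma ra3 (n : ℕ) : cnt l3 (n+4) = cnt l2 (n+4) + cnt l3 n := cnt_cons_add 4 (by omega) l2 n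
lemma ri2 (n : ℕ) : cnt l2 (n+4) = cnt l1 (n+4) + cnt l2 n := cnt_cons_add 4 (by omega) l1 n
lemma rj1 (n : ℕ) : cnt l1 (n+5) = cnt l1 n := by
  have h := cnt_cons_add 5 (by omega) [] n
  have h2 : cnt [] (n+5) = 0 := by rw [cnt, if_neg (by omega)]
  rw [show l1 = 5 :: [] from rfl]
  omega

def Jz (m : ℕ) : ℤ := (cnt l1 (m+2) : ℤ) - cnt l1 (m+1) + cnt l1 m
def Iz (m : ℕ) : ℤ := (cnt l2 (m+2) : ℤ) - cnt l2 (m+1) + cnt l2 m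
def Hz (m : ℕ) : ℤ := (cnt l3 (m+2) : ℤ) - cnt l3 (m+1) + cnt l3 m
def Gz (m : ℕ) : ℤ := (cnt l4 (m+2) : ℤ) - cnt l4 (m+1) + cnt l4 m
def Ez (m : ℕ) : ℤ := (cnt l5 (m+2) : ℤ) - cnt l5 (m+1) + cnt l5 m
def Dz (m : ℕ) : ℤ := (cnt l7 (m+1) : ℤ) - cnt l7 m

lemma Jz_per (m : ℕ) : Jz (m+5) = Jz m := by
  have h1 := rj1 (m+2)
  have h2 := rj1 (m+1)
  have h3 := rj1 m
  simp only [Jz, Nat.add_assoc, Nat.reduceAdd] at *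
  omega

lemma Jsum : ∀ m : ℕ, Jz (m+4) + Jz (m+8) + Jz (m+12) + Jz (m+16) + Jz (m+20) = 1 := by
  intro m
  induction m using Nat.strong_induction_on with
  | _ m IH =>
    by_cases hm : m < 5
    · interval_cases m <;> decide
    · obtain ⟨m', rfl⟩ : ∃ m', m = m' + 5 := ⟨m - 5, by omega⟩
      have e1 := Jz_per (m'+4)
      have e2 := Jz_per (m'+8)
      have e3 := Jz_per (m'+12)
      have e4 := Jz_per (m'+16)
      have e5 := Jz_per (m'+20)
      have := IH m' (by omega)
      rw [show m'+5+4 = m'+4+5 by omega, show m'+5+8 = m'+8+5 by omega,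
        show m'+5+12 = m'+12+5 by omega, show m'+5+16 = m'+16+5 by omega,
        show m'+5+20 = m'+20+5 by omega]
      omega

lemma Iz_step (m : ℕ) : Iz (m+20) = Iz m + 1 := by
  have j := Jsum m
  have r0 := ri2 (m+0)
  have r1 := ri2 (m+1)
  have r2 := ri2 (m+2)
  have r4 := ri2 (m+4)
  have r5 := ri2 (m+5)
  have r6 := ri2 (m+6)
  have r8 := ri2 (m+8)
  have r9 := ri2 (m+9)
  have r10 := ri2 (m+10)
  have r12 := ri2 (m+12)
  have r13 := ri2 (m+13)
  have r14 := ri2 (m+14)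
  have r16 := ri2 (m+16)
  have r17 := ri2 (m+17)
  have r18 := ri2 (m+18)
  simp only [Iz, Jz, Nat.add_assoc, Nat.add_zero, Nat.reduceAdd] at *
  omega

lemma I1 : ∀ m : ℕ, 0 ≤ Iz m := by
  intro m
  induction m using Nat.strong_induction_on with
  | _ m IH =>
    by_cases hm : m < 20
    · interval_cases m <;> decide
    · obtain ⟨m', rfl⟩ : ∃ m', m = m' + 20 := ⟨m - 20, by omega⟩
      have := Iz_step m'
      have := IH m' (by omega)
      omega

lemma H1 : ∀ m : ℕ, 12 ≤ m → 0 ≤ Hz m := by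
  intro m
  induction m using Nat.strong_induction_on with
  | _ m IH =>
    intro hm
    by_cases hm' : m < 16
    · interval_cases m <;> decide
    · obtain ⟨m', rfl⟩ : ∃ m', m = m' + 4 := ⟨m - 4, by omega⟩
      have e : Hz (m'+4) = Hz m' + Iz (m'+4) := by
        have h1 := ra3 (m'+2)
        have h2 := ra3 (m'+1)
        have h3 := ra3 m'
        simp only [Hz, Iz, Nat.add_assoc, Nat.reduceAdd] at *
        omega
      have := IH m' (by omega) (by omega)
      have := I1 (m'+4)
      omega

lemma Gstep (m' : ℕ) : Gz (m'+3) = Gz m' + Hz (m'+3) := by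
  have h1 := rb4 (m'+2)
  have h2 := rb4 (m'+1)
  have h3 := rb4 m'
  simp only [Gz, Hz, Nat.add_assoc, Nat.reduceAdd] at *
  omega

lemma G1 : ∀ m : ℕ, 0 ≤ Gz m := by
  intro m
  induction m using Nat.strong_induction_on with
  | _ m IH =>
    by_cases hm : m < 15
    · interval_cases m <;> decide
    · obtain ⟨m', rfl⟩ : ∃ m', m = m' + 3 := ⟨m - 3, by omega⟩
      have := Gstep m'
      have := IH m' (by omega)
      have := H1 (m'+3) (by omega)
      omega

lemma G2 : ∀ m : ℕ, 4 ≤ m → 1 ≤ Gz m := by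
  intro m
  induction m using Nat.strong_induction_on with
  | _ m IH =>
    intro hm
    by_cases hm' : m < 15
    · interval_cases m <;> decide
    · obtain ⟨m', rfl⟩ : ∃ m', m = m' + 3 := ⟨m - 3, by omega⟩
      have := Gstep m'
      have := IH m' (by omega) (by omega)
      have := H1 (m'+3) (by omega)
      omega

lemma Estep (m' : ℕ) : Ez (m'+2) = Ez m' + Gz (m'+2) := by
  have h1 := rc5 (m'+2)
  have h2 := rc5 (m'+1)
  have h3 := rc5 m'
  simp only [Ez, Gz, Nat.add_assoc, Nat.reduceAdd] at *
  omega

lemma E1 : ∀ m : ℕ, 0 ≤ Ez m := by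
  intro m
  induction m using Nat.strong_induction_on with
  | _ m IH =>
    by_cases hm : m < 2
    · interval_cases m <;> decide
    · obtain ⟨m', rfl⟩ : ∃ m', m = m' + 2 := ⟨m - 2, by omega⟩
      have := Estep m'
      have := IH m' (by omega)
      have := G1 (m'+2)
      omega

lemma E2 : ∀ m : ℕ, 4 ≤ m → 1 ≤ Ez m := by
  intro m
  induction m using Nat.strong_induction_on with
  | _ m IH =>
    intro hm
    by_cases hm' : m < 6
    · interval_cases m <;> decide
    · obtain ⟨m', rfl⟩ : ∃ m', m = m' + 2 := ⟨m - 2, by omega⟩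
      have := Estep m'
      have := IH m' (by omega) (by omega)
      have := G1 (m'+2)
      omega

lemma Dmain : ∀ m : ℕ, 1 ≤ m → 0 ≤ Dz m ∧ (m ≠ 2 → m ≠ 4 → 1 ≤ Dz m) := by
  intro m
  induction m using Nat.strong_induction_on with
  | _ m IH =>
    intro hm
    by_cases hm' : m < 7
    · interval_cases m <;>
        exact ⟨by decide, fun h1 h2 =>
          by first | exact absurd rfl h1 | exact absurd rfl h2 | decide⟩
    · obtain ⟨m', rfl⟩ : ∃ m', m = m' + 7 := ⟨m - 7, by omega⟩
      have f1 := rF (m'+6)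
      have f2 := rF (m'+5)
      have f3 := rF (m'+4)
      have f4 := rF (m'+3)
      have f5 := rF (m'+2)
      have f6 := rF (m'+1)
      have g1 := rc6 (m'+5)
      have g2 := rc6 (m'+4)
      have g3 := rc6 (m'+3)
      have hE := E2 (m'+6) (by omega)
      have hIH := (IH (m'+1) (by omega) (by omega)).1
      simp only [Dz, Ez, Nat.add_assoc, Nat.reduceAdd] at *
      exact ⟨by omega, fun _ _ => by omega⟩

/-! ### The inductive claims over `k` -/

def Ck (k : ℕ) : Prop :=
  (∀ n, 1 ≤ n → cnt (LL k) n ≤ cnt (LL k) (n+1)) ∧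
  (∀ n, 1 ≤ n → n ≠ 2 → n ≠ 4 → cnt (LL k) n + 1 ≤ cnt (LL k) (n+1)) ∧
  (cnt (LL k) (k+1) + 2 ≤ cnt (LL k) (k+2))

lemma LL4_eq (n : ℕ) : cnt (LL 4) n = cnt l7 n := cnt_perm (by decide) (by decide) n

lemma Ck4 : Ck 4 := by
  refine ⟨?_, ?_, ?_⟩
  · intro n hn
    rw [LL4_eq, LL4_eq]
    have := (Dmain n hn).1
    simp only [Dz] at this
    omega
  · intro n hn h2 h4
    rw [LL4_eq, LL4_eq]
    have := (Dmain n hn).2 h2 h4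
    simp only [Dz] at this
    omega
  · rw [LL4_eq, LL4_eq]
    decide

lemma Ck_step (k : ℕ) (hk : 4 ≤ k) (hC : Ck k) : Ck (k+1) := by
  obtain ⟨C0, C1, C2⟩ := hC
  set F := cnt (LL k) with hF
  set T : List ℕ := (k+1) :: LL k with hT
  set M := cnt T with hM
  have hTelts : ∀ x ∈ T, 2 ≤ x := by
    intro x hx
    rcases List.mem_cons.1 hx with rfl | h
    · omega
    · exact LL_elts k x h
  have hM0 : M 0 = 1 := cnt_zero _
  have hM1 : M 1 = 0 := cnt_one _ hTelts
  have hM2 : M 2 = 2 := by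
    rw [hM, hT, cnt_cons_lt (by omega), ← hF]
    exact cnt_LL_two k (by omega)
  have rM_lt : ∀ n, n < k+1 → M n = F n := fun n hn => cnt_cons_lt hn _
  have rM_le : ∀ n, k+1 ≤ n → M n = F n + M (n - (k+1)) :=
    fun n hn => cnt_cons_le (by omega) hn _
  -- A-claims for M
  have A : ∀ n, 1 ≤ n → (M n ≤ M (n+1) ∧ (n ≠ 2 → n ≠ 4 → M n + 1 ≤ M (n+1))) := by
    intro n
    induction n using Nat.strong_induction_on with
    | _ n IH =>
      intro hn
      rcases show n < k ∨ n = k ∨ n = k + 1 ∨ k + 2 ≤ n by omega with h | h | h | h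
      · rw [rM_lt n (by omega), rM_lt (n+1) (by omega)]
        exact ⟨C0 n hn, fun h2 h4 => C1 n hn h2 h4⟩
      · rw [rM_lt n (by omega), rM_le (n+1) (by omega),
          show n+1-(k+1) = 0 by omega, hM0]
        have := C0 n hn
        exact ⟨by omega, fun _ _ => by omega⟩
      · rw [h, rM_le (k+1) (by omega), show k+1-(k+1) = 0 by omega, hM0,
          rM_le (k+1+1) (by omega), show k+1+1-(k+1) = 1 by omega, hM1,
          show k+1+1 = k+2 by omega]
        have := C2
        exact ⟨by omega, fun _ _ => by omega⟩
      · have e1 : M n = F n + M (n - (k+1)) := rM_le n (by omega)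
        have e2 : M (n+1) = F (n+1) + M (n - k) := by
          rw [rM_le (n+1) (by omega)]
          congr 2
          omega
        have e3 : M (n-(k+1)) ≤ M (n-(k+1)+1) := (IH (n-(k+1)) (by omega) (by omega)).1
        rw [show n-(k+1)+1 = n-k by omega] at e3
        have h0 := C0 n (by omega)
        have h1 := C1 n (by omega) (by omega) (by omega)
        exact ⟨by omega, fun _ _ => by omega⟩
  -- B-claims for cnt ((k+2) :: T)
  set G := cnt ((k+2) :: T) with hG
  have hG0 : G 0 = 1 := cnt_zero _
  have hG1 : G 1 = 0 := cnt_one _ (by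
    intro x hx
    rcases List.mem_cons.1 hx with rfl | h
    · omega
    · exact hTelts x h)
  have rG_lt : ∀ n, n < k+2 → G n = M n := fun n hn => cnt_cons_lt hn _
  have rG_le : ∀ n, k+2 ≤ n → G n = M n + G (n - (k+2)) :=
    fun n hn => cnt_cons_le (by omega) hn _
  have B : ∀ n, 1 ≤ n → (G n ≤ G (n+1) ∧ (n ≠ 2 → n ≠ 4 → G n + 1 ≤ G (n+1))) := by
    intro n
    induction n using Nat.strong_induction_on with
    | _ n IH =>
      intro hn
      rcases show n ≤ k ∨ n = k + 1 ∨ n = k + 2 ∨ k + 3 ≤ n by omega with h | h | h | h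
      · rw [rG_lt n (by omega), rG_lt (n+1) (by omega)]
        exact A n hn
      · subst h
        rw [rG_lt (k+1) (by omega), rG_le (k+1+1) (by omega),
          show k+1+1-(k+2) = 0 by omega, hG0]
        have := (A (k+1) (by omega)).2 (by omega) (by omega)
        exact ⟨by omega, fun _ _ => by omega⟩
      · subst h
        rw [rG_le (k+2) (by omega), show k+2-(k+2) = 0 by omega, hG0,
          rG_le (k+2+1) (by omega), show k+2+1-(k+2) = 1 by omega, hG1]
        have e1 : M (k+2) = F (k+2) + M 1 := by
          rw [rM_le (k+2) (by omega)]
          congr 2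
          omega
        have e2 : M (k+3) = F (k+3) + M 2 := by
          rw [rM_le (k+3) (by omega)]
          congr 2
          omega
        have := C1 (k+2) (by omega) (by omega) (by omega)
        rw [show k+2+1 = k+3 by omega] at this
        rw [show k+2+1 = k+3 by omega]
        exact ⟨by omega, fun _ _ => by omega⟩
      · have e1 : G n = M n + G (n - (k+2)) := rG_le n (by omega)
        have e2 : G (n+1) = M (n+1) + G (n - (k+1)) := by
          rw [rG_le (n+1) (by omega)]
          congr 2
          omega
        have e3 : G (n-(k+2)) ≤ G (n-(k+2)+1) := (IH (n-(k+2)) (by omega) (by omega)).1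
        rw [show n-(k+2)+1 = n-(k+1) by omega] at e3
        have h1 := (A n (by omega)).2 (by omega) (by omega)
        exact ⟨by omega, fun _ _ => by omega⟩
  -- transfer to LL (k+1)
  have hGLL : ∀ n, cnt (LL (k+1)) n = G n :=
    cnt_perm (LL_step_perm k (by omega)) (LL_elts1 (k+1))
  refine ⟨?_, ?_, ?_⟩
  · intro n hn
    rw [hGLL, hGLL]
    exact (B n hn).1
  · intro n hn h2 h4
    rw [hGLL, hGLL]
    exact (B n hn).2 h2 h4
  · rw [hGLL, hGLL]
    -- need : G (k+2) + 2 ≤ G (k+3)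
    have e0 : G (k+2) = M (k+2) + G 0 := by
      rw [rG_le (k+2) (by omega)]
      congr 2
      omega
    have e0' : G (k+3) = M (k+3) + G 1 := by
      rw [rG_le (k+3) (by omega)]
      congr 2
      omega
    have e1 : M (k+2) = F (k+2) + M 1 := by
      rw [rM_le (k+2) (by omega)]
      congr 2
      omega
    have e2 : M (k+3) = F (k+3) + M 2 := by
      rw [rM_le (k+3) (by omega)]
      congr 2
      omega
    have := C1 (k+2) (by omega) (by omega) (by omega)
    rw [show k+2+1 = k+3 by omega] at this
    rw [show k+1+1 = k+2 by omega, show k+1+2 = k+3 by omega]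
    omega

lemma CkAll : ∀ k, 4 ≤ k → Ck k := by
  intro k
  induction k with
  | zero => omega
  | succ k ih =>
      intro hk
      by_cases h4 : k + 1 = 4
      · rw [h4]; exact Ck4
      · exact Ck_step k (by omega) (ih (by omega))

/-- For `k ≥ 4` and `n ≥ 2`, `pp_k(n) ≥ pp_k(n-1)`; in particular
`pp_k(2k+7) ≥ pp_k(2k+6) + 1`. -/
theorem ppk_monotone (k : ℕ) (hk : 4 ≤ k) :
    (∀ n : ℕ, 2 ≤ n → ppCount k (n - 1) ≤ ppCount k n) ∧
    ppCount k (2 * k + 6) + 1 ≤ ppCount k (2 * k + 7) := by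
  obtain ⟨C0, C1, _⟩ := CkAll k hk
  constructor
  · intro n hn
    rw [ppCount_eq_cnt k (n-1) (by omega), ppCount_eq_cnt k n (by omega)]
    have := C0 (n-1) (by omega)
    rw [show n-1+1 = n by omega] at this
    exact this
  · rw [ppCount_eq_cnt k (2*k+6) (by omega), ppCount_eq_cnt k (2*k+7) (by omega)]
    have := C1 (2*k+6) (by omega) (by omega) (by omega)
    rw [show 2*k+6+1 = 2*k+7 by omega] at this
    exact this
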